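/- For real z with |z| < 27/4, ∑_{n≥1} z^n / (n · binom(3n, n)) = (2/3) · ∫_0^1 (x z) / (1 − z(1−x)x²) dx. -/

import Mathlib

open MeasureTheory Nat ENNReal

lemma beta_nat (a b : ℕ) :
    ∫ x in (0:ℝ)..1, x ^ a * (1 - x) ^ b = (a ! : ℝ) * b ! / (a + b + 1)! := by
  have h := Complex.Gamma_mul_Gamma_eq_betaIntegral (s := (a:ℂ) + 1) (t := (b:ℂ) + 1)
    (by simp; positivity) (by simp; positivity)
  have hG : Complex.Gamma ((a:ℂ)+1) * Complex.Gamma ((b:ℂ)+1)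
      = Complex.Gamma ((a:ℂ)+1+((b:ℂ)+1)) * Complex.betaIntegral ((a:ℂ)+1) ((b:ℂ)+1) := h
  have h1 : Complex.Gamma ((a:ℂ)+1) = (a ! : ℂ) := Complex.Gamma_nat_eq_factorial a
  have h2 : Complex.Gamma ((b:ℂ)+1) = (b ! : ℂ) := Complex.Gamma_nat_eq_factorial b
  have h3 : Complex.Gamma ((a:ℂ)+1+((b:ℂ)+1)) = ((a+b+1)! : ℂ) := by
    have := Complex.Gamma_nat_eq_factorial (a+b+1)
    rw [← this]; congr 1; push_cast; ring
  have hbeta : Complex.betaIntegral ((a:ℂ)+1) ((b:ℂ)+1)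
      = ((∫ x in (0:ℝ)..1, x ^ a * (1 - x) ^ b : ℝ) : ℂ) := by
    rw [Complex.betaIntegral]
    rw [← intervalIntegral.integral_ofReal]
    apply intervalIntegral.integral_congr
    intro x hx
    have : (a:ℂ) + 1 - 1 = ((a:ℕ) : ℂ) := by ring
    rw [this]
    have : (b:ℂ) + 1 - 1 = ((b:ℕ) : ℂ) := by ring
    rw [this]
    simp only [Complex.cpow_natCast]
    push_cast
    ring
  rw [h1, h2, h3, hbeta] at hG
  have key : (a ! * b ! : ℝ) = ((a+b+1)! : ℝ) * ∫ x in (0:ℝ)..1, x ^ a * (1 - x) ^ b := by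
    exact_mod_cast hG
  have hne : ((a+b+1)! : ℝ) ≠ 0 := by exact_mod_cast (Nat.factorial_ne_zero _)
  rw [eq_div_iff hne]
  linarith [key]

theorem stmt_16 (z : ℝ) (hz : |z| < 27 / 4) :
    ∑' n : ℕ, z ^ (n + 1) / ((n + 1) * (Nat.choose (3 * (n + 1)) (n + 1))) =
      (2 / 3) * ∫ x in (0:ℝ)..1, x * z / (1 - z * (1 - x) * x ^ 2) := by
  set f : ℕ → ℝ → ℝ := fun k x => z ^ (k + 1) * (x ^ (2 * k + 1) * (1 - x) ^ k) with hf_def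
  have hc : |z| * (4 / 27) < 1 := by nlinarith [abs_nonneg z]
  have hc0 : 0 ≤ |z| * (4 / 27) := by positivity
  -- bound on (1-x)*x^2 on [0,1]
  have hw : ∀ x : ℝ, 0 ≤ x → x ≤ 1 → (1 - x) * x ^ 2 ≤ 4 / 27 := by
    intro x hx0 hx1
    nlinarith [mul_nonneg (show (0:ℝ) ≤ x + 1/3 by linarith) (sq_nonneg (x - 2/3))]
  have hw0 : ∀ x : ℝ, 0 ≤ x → x ≤ 1 → 0 ≤ (1 - x) * x ^ 2 := by
    intro x hx0 hx1; exact mul_nonneg (by linarith) (sq_nonneg x)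
  have habs : ∀ x : ℝ, 0 ≤ x → x ≤ 1 → |z * ((1 - x) * x ^ 2)| < 1 := by
    intro x hx0 hx1
    rw [abs_mul]
    calc |z| * |(1 - x) * x ^ 2| ≤ |z| * (4 / 27) := by
          apply mul_le_mul_of_nonneg_left _ (abs_nonneg z)
          rw [abs_of_nonneg (hw0 x hx0 hx1)]; exact hw x hx0 hx1
      _ < 1 := hc
  -- pointwise identity of the tsum
  have hpt : ∀ x ∈ Set.Ioc (0:ℝ) 1, (∑' k, f k x) = x * z / (1 - z * (1 - x) * x ^ 2) := by
    intro x hx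
    have hx0 : (0:ℝ) ≤ x := le_of_lt hx.1
    have hx1 : x ≤ 1 := hx.2
    have h1 : ∀ k : ℕ, f k x = (x * z) * (z * ((1 - x) * x ^ 2)) ^ k := by
      intro k
      have e : (z * ((1 - x) * x ^ 2)) ^ k = z ^ k * ((1 - x) ^ k * x ^ (2 * k)) := by
        rw [mul_pow, mul_pow, ← pow_mul]
      simp only [hf_def]; rw [e]; ring
    rw [tsum_congr h1, tsum_mul_left, tsum_geometric_of_abs_lt_one (habs x hx0 hx1)]
    rw [div_eq_mul_inv]
    ring_nf
  -- norm bounds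
  have hnorm : ∀ k : ℕ, ∀ x ∈ Set.Ioc (0:ℝ) 1, ‖f k x‖ ≤ |z| * (|z| * (4 / 27)) ^ k := by
    intro k x hx
    have hx0 : (0:ℝ) ≤ x := le_of_lt hx.1
    have hx1 : x ≤ 1 := hx.2
    have h1 : ‖f k x‖ = |z| ^ (k+1) * (x ^ (2*k+1) * (1 - x) ^ k) := by
      rw [hf_def]
      rw [Real.norm_eq_abs, abs_mul, abs_pow, abs_mul, abs_pow, abs_pow,
        abs_of_nonneg hx0, abs_of_nonneg (by linarith : (0:ℝ) ≤ 1 - x)]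
    rw [h1]
    have h2 : x ^ (2*k+1) * (1 - x) ^ k ≤ (4/27) ^ k := by
      have h3 : x ^ (2*k+1) ≤ x ^ (2*k) := pow_le_pow_of_le_one hx0 hx1 (by omega)
      have h4 : x ^ (2*k) * (1 - x) ^ k = ((1 - x) * x ^ 2) ^ k := by
        rw [mul_pow, ← pow_mul]; ring
      calc x ^ (2*k+1) * (1 - x) ^ k ≤ x ^ (2*k) * (1 - x) ^ k := by
            apply mul_le_mul_of_nonneg_right h3 (pow_nonneg (by linarith) k)
        _ = ((1 - x) * x ^ 2) ^ k := h4
        _ ≤ (4/27) ^ k := pow_le_pow_left₀ (hw0 x hx0 hx1) (hw x hx0 hx1) k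
    calc |z| ^ (k+1) * (x ^ (2*k+1) * (1 - x) ^ k) ≤ |z| ^ (k+1) * (4/27) ^ k := by
          apply mul_le_mul_of_nonneg_left h2 (by positivity)
      _ = |z| * (|z| * (4 / 27)) ^ k := by rw [mul_pow]; ring
  -- interchange
  have hmeas : ∀ k : ℕ, AEStronglyMeasurable (f k) (volume.restrict (Set.Ioc (0:ℝ) 1)) := by
    intro k
    apply Continuous.aestronglyMeasurable
    fun_prop
  have hbnd : ∀ k : ℕ, ∫⁻ x in Set.Ioc (0:ℝ) 1, ‖f k x‖₊ ∂volume
      ≤ ENNReal.ofReal (|z| * (|z| * (4 / 27)) ^ k) := by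
    intro k
    calc ∫⁻ x in Set.Ioc (0:ℝ) 1, (‖f k x‖₊ : ℝ≥0∞) ∂volume
        ≤ ∫⁻ _ in Set.Ioc (0:ℝ) 1, ENNReal.ofReal (|z| * (|z| * (4 / 27)) ^ k) ∂volume := by
          apply setLIntegral_mono measurable_const
          intro x hx
          rw [← enorm_eq_nnnorm, ← ofReal_norm]
          exact ENNReal.ofReal_le_ofReal (hnorm k x hx)
      _ = ENNReal.ofReal (|z| * (|z| * (4 / 27)) ^ k) := by
          rw [lintegral_const, Measure.restrict_apply_univ, Real.volume_Ioc]
          simp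
  have hsum : Summable (fun k : ℕ => |z| * (|z| * (4 / 27)) ^ k) :=
    (summable_geometric_of_lt_one hc0 hc).mul_left _
  have hfin : ∑' k, ∫⁻ x in Set.Ioc (0:ℝ) 1, ‖f k x‖₊ ∂volume ≠ ⊤ := by
    apply ne_top_of_le_ne_top _ (ENNReal.tsum_le_tsum hbnd)
    rw [← ENNReal.ofReal_tsum_of_nonneg (fun k => by positivity) hsum]
    exact ENNReal.ofReal_ne_top
  have hswap := MeasureTheory.integral_tsum (μ := volume.restrict (Set.Ioc (0:ℝ) 1)) hmeas hfin
  -- compute each integral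
  have hival : ∀ k : ℕ, ∫ x in Set.Ioc (0:ℝ) 1, f k x
      = z ^ (k+1) * (((2*k+1)! : ℝ) * k ! / (3*k+2)!) := by
    intro k
    rw [← intervalIntegral.integral_of_le (zero_le_one)]
    simp only [hf_def]
    rw [intervalIntegral.integral_const_mul]
    rw [beta_nat (2*k+1) k]
    have e : 2*k+1 + k + 1 = 3*k+2 := by omega
    rw [e]
  -- term identity
  have hterm : ∀ n : ℕ, z ^ (n + 1) / ((n + 1) * (Nat.choose (3 * (n + 1)) (n + 1)))
      = (2/3) * (z ^ (n+1) * (((2*n+1)! : ℝ) * n ! / (3*n+2)!)) := by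
    intro n
    have hch := Nat.choose_mul_factorial_mul_factorial (show n+1 ≤ 3*(n+1) by omega)
    have e1 : 3*(n+1) - (n+1) = 2*n+1+1 := by omega
    have e2 : 3*(n+1) = 3*n+2+1 := by omega
    rw [e1, e2] at hch
    rw [Nat.factorial_succ (2*n+1), Nat.factorial_succ (3*n+2), Nat.factorial_succ n] at hch
    have hchR : (Nat.choose (3*(n+1)) (n+1) : ℝ) * ((n+1) * n !) * ((2*n+1+1) * (2*n+1)!)
        = (3*n+2+1) * (3*n+2)! := by exact_mod_cast hch
    have hC : (0:ℝ) < (Nat.choose (3*(n+1)) (n+1) : ℝ) := by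
      exact_mod_cast Nat.choose_pos (show n+1 ≤ 3*(n+1) by omega)
    have hfac : (0:ℝ) < ((3*n+2)! : ℝ) := by exact_mod_cast Nat.factorial_pos _
    have hn1 : (0:ℝ) < (n:ℝ) + 1 := by positivity
    have key : 2 * (((n:ℝ)+1) * (Nat.choose (3*(n+1)) (n+1) : ℝ) * (((2*n+1)! : ℝ) * (n ! : ℝ)))
        = 3 * ((3*n+2)! : ℝ) := by
      apply mul_left_cancel₀ hn1.ne'
      push_cast at hchR ⊢
      linear_combination hchR
    rw [div_eq_iff (by positivity : ((n:ℝ)+1) * (Nat.choose (3*(n+1)) (n+1) : ℝ) ≠ 0)]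
    field_simp
    push_cast at key ⊢
    linear_combination (- z ^ (n+1)) * key
  -- assemble
  rw [tsum_congr hterm, tsum_mul_left]
  congr 1
  rw [intervalIntegral.integral_of_le (zero_le_one)]
  rw [← setIntegral_congr_fun measurableSet_Ioc hpt]
  rw [hswap, tsum_congr hival]
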